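/- Let V ∈ ℝ^{B×N}, W ∈ ℝ^{B×K}, H ∈ ℝ^{K×N} have all entries strictly positive, and let D_IS(X ‖ Y) = Σ_{i,n} ( X_{in}/Y_{in} − log(X_{in}/Y_{in}) − 1 ) denote the Itakura–Saito divergence between entrywise positive matrices of equal size. Define the updated matrix W⁺ entrywise by W⁺_{bk} = W_{bk} · sqrt( [ ( V ⊙ (WH)^{⊙(−2)} ) Hᵀ ]_{bk} / [ (WH)^{⊙(−1)} Hᵀ ]_{bk} ). Then D_IS(V ‖ W⁺ H) ≤ D_IS(V ‖ W H). -/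

import Mathlib

open Finset Matrix

/-- Itakura–Saito divergence between two entrywise positive matrices of equal size:
`D_IS(X‖Y) = Σ_{i,n} (X_{in}/Y_{in} − log(X_{in}/Y_{in}) − 1)`. -/
noncomputable def ISdiv {I N : Type*} [Fintype I] [Fintype N]
    (X Y : Matrix I N ℝ) : ℝ :=
  ∑ i, ∑ n, (X i n / Y i n - Real.log (X i n / Y i n) - 1)

/-- AM–GM step: the minimizer `w √(P/Q)` of `x ↦ w²P/x + Qx` gives value `≤` that at `w`. -/
private lemma IS_amgm_step (w P Q : ℝ) (hw : 0 < w) (hP : 0 < P) (hQ : 0 < Q) :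
    w ^ 2 * P / (w * Real.sqrt (P / Q)) + w * Real.sqrt (P / Q) * Q ≤ w * P + w * Q := by
  obtain ⟨a, ha2, ha0⟩ : ∃ a : ℝ, a ^ 2 = P ∧ 0 < a :=
    ⟨Real.sqrt P, Real.sq_sqrt hP.le, Real.sqrt_pos.mpr hP⟩
  obtain ⟨c, hc2, hc0⟩ : ∃ c : ℝ, c ^ 2 = Q ∧ 0 < c :=
    ⟨Real.sqrt Q, Real.sq_sqrt hQ.le, Real.sqrt_pos.mpr hQ⟩
  have hs : Real.sqrt (P / Q) = a / c := by
    rw [← ha2, ← hc2, Real.sqrt_div (by positivity), Real.sqrt_sq ha0.le, Real.sqrt_sq hc0.le]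
  rw [hs, ← ha2, ← hc2]
  have h1 : w ^ 2 * (a ^ 2) / (w * (a / c)) = w * a * c := by
    field_simp
  have h2 : w * (a / c) * c ^ 2 = w * a * c := by
    field_simp
  rw [h1, h2]
  nlinarith [mul_nonneg hw.le (sq_nonneg (a - c))]

/-- Core per-row inequality for the IS-NMF MM basis update. -/
private lemma IS_core {K N : Type*} [Fintype K] [Fintype N] [Nonempty K] [Nonempty N]
    (w wp : K → ℝ) (h : K → N → ℝ) (v vt y : N → ℝ) (P Q : K → ℝ)
    (hw : ∀ k, 0 < w k) (hh : ∀ k n, 0 < h k n) (hv : ∀ n, 0 < v n)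
    (hvt : ∀ n, vt n = ∑ j, w j * h j n)
    (hy : ∀ n, y n = ∑ j, wp j * h j n)
    (hPd : ∀ k, P k = ∑ n, v n * (vt n)⁻¹ ^ 2 * h k n)
    (hQd : ∀ k, Q k = ∑ n, (vt n)⁻¹ * h k n)
    (hwp : ∀ k, wp k = w k * Real.sqrt (P k / Q k)) :
    ∑ n, (v n / y n - Real.log (v n / y n) - 1)
      ≤ ∑ n, (v n / vt n - Real.log (v n / vt n) - 1) := by
  classical
  have hvt0 : ∀ n, 0 < vt n := fun n => (hvt n) ▸
    Finset.sum_pos (fun j _ => mul_pos (hw j) (hh j n)) univ_nonempty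
  have hP0 : ∀ k, 0 < P k := fun k => (hPd k) ▸
    Finset.sum_pos (fun n _ =>
      mul_pos (mul_pos (hv n) (pow_pos (inv_pos.mpr (hvt0 n)) 2)) (hh k n)) univ_nonempty
  have hQ0 : ∀ k, 0 < Q k := fun k => (hQd k) ▸
    Finset.sum_pos (fun n _ =>
      mul_pos (inv_pos.mpr (hvt0 n)) (hh k n)) univ_nonempty
  have hwp0 : ∀ k, 0 < wp k := fun k => by
    rw [hwp k]
    exact mul_pos (hw k) (Real.sqrt_pos.mpr (div_pos (hP0 k) (hQ0 k)))
  have hy0 : ∀ n, 0 < y n := fun n => (hy n) ▸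
    Finset.sum_pos (fun j _ => mul_pos (hwp0 j) (hh j n)) univ_nonempty
  -- Step A: Jensen / Sedrakyan bound on v/y
  have stepA : ∀ n, v n / y n
      ≤ v n * (∑ k, (w k * h k n) ^ 2 / (wp k * h k n)) / vt n ^ 2 := by
    intro n
    have cs : vt n ^ 2 / y n ≤ ∑ k, (w k * h k n) ^ 2 / (wp k * h k n) := by
      have := Finset.sq_sum_div_le_sum_sq_div (univ : Finset K)
        (fun k => w k * h k n) (g := fun k => wp k * h k n)
        (fun k _ => mul_pos (hwp0 k) (hh k n))
      rwa [← hvt n, ← hy n] at this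
    have hS0 : 0 < ∑ k, (w k * h k n) ^ 2 / (wp k * h k n) :=
      lt_of_lt_of_le (div_pos (pow_pos (hvt0 n) 2) (hy0 n)) cs
    rw [div_le_div_iff₀ (hy0 n) (pow_pos (hvt0 n) 2)]
    calc v n * vt n ^ 2 = v n * (vt n ^ 2 / y n) * y n := by
          rw [mul_assoc, div_mul_cancel₀ _ (hy0 n).ne']
      _ ≤ v n * (∑ k, (w k * h k n) ^ 2 / (wp k * h k n)) * y n := by
          apply mul_le_mul_of_nonneg_right _ (hy0 n).le
          exact mul_le_mul_of_nonneg_left cs (hv n).le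
  -- Step B: tangent bound on log
  have stepB : ∀ n, Real.log (y n) ≤ Real.log (vt n) + (y n / vt n - 1) := by
    intro n
    have := Real.log_le_sub_one_of_pos (div_pos (hy0 n) (hvt0 n))
    rw [Real.log_div (hy0 n).ne' (hvt0 n).ne'] at this
    linarith
  -- rewrite divergence terms
  have expand : ∀ (yy : N → ℝ), (∀ n, 0 < yy n) →
      ∑ n, (v n / yy n - Real.log (v n / yy n) - 1)
        = ∑ n, ((v n / yy n + Real.log (yy n)) - (Real.log (v n) + 1)) := by
    intro yy hyy
    refine Finset.sum_congr rfl fun n _ => ?_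
    rw [Real.log_div (hv n).ne' (hyy n).ne']
    ring
  rw [expand y hy0, expand vt hvt0, Finset.sum_sub_distrib, Finset.sum_sub_distrib]
  apply sub_le_sub_right
  -- main bound
  calc ∑ n, (v n / y n + Real.log (y n))
      ≤ ∑ n, (v n * (∑ k, (w k * h k n) ^ 2 / (wp k * h k n)) / vt n ^ 2
          + (Real.log (vt n) + (y n / vt n - 1))) :=
        Finset.sum_le_sum fun n _ => add_le_add (stepA n) (stepB n)
    _ = (∑ n, ∑ k, (v n * ((w k * h k n) ^ 2 / (wp k * h k n)) / vt n ^ 2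
          + wp k * h k n * (vt n)⁻¹))
        + ∑ n, (Real.log (vt n) - 1) := by
        rw [← Finset.sum_add_distrib]
        refine Finset.sum_congr rfl fun n _ => ?_
        rw [Finset.sum_add_distrib]
        have h1 : ∑ k, v n * ((w k * h k n) ^ 2 / (wp k * h k n)) / vt n ^ 2
            = v n * (∑ k, (w k * h k n) ^ 2 / (wp k * h k n)) / vt n ^ 2 := by
          rw [Finset.mul_sum, Finset.sum_div]
        have h2 : ∑ k, wp k * h k n * (vt n)⁻¹ = y n / vt n := by
          rw [← Finset.sum_mul, ← hy n, div_eq_mul_inv]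
        rw [h1, h2]
        ring
    _ ≤ (∑ n, ∑ k, (v n * (w k * h k n) * (vt n)⁻¹ ^ 2
          + w k * h k n * (vt n)⁻¹))
        + ∑ n, (Real.log (vt n) - 1) := by
        apply add_le_add_left
        have e1 : (∑ n, ∑ k, (v n * ((w k * h k n) ^ 2 / (wp k * h k n)) / vt n ^ 2
              + wp k * h k n * (vt n)⁻¹))
            = ∑ k, ∑ n, (v n * ((w k * h k n) ^ 2 / (wp k * h k n)) / vt n ^ 2
              + wp k * h k n * (vt n)⁻¹) := Finset.sum_comm
        have e2 : (∑ n, ∑ k, (v n * (w k * h k n) * (vt n)⁻¹ ^ 2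
              + w k * h k n * (vt n)⁻¹))
            = ∑ k, ∑ n, (v n * (w k * h k n) * (vt n)⁻¹ ^ 2
              + w k * h k n * (vt n)⁻¹) := Finset.sum_comm
        rw [e1, e2]
        apply Finset.sum_le_sum
        intro k _
        have e1 : ∑ n, (v n * ((w k * h k n) ^ 2 / (wp k * h k n)) / vt n ^ 2
            + wp k * h k n * (vt n)⁻¹)
            = (w k) ^ 2 * P k / wp k + wp k * Q k := by
          have a1 : ∑ n, v n * ((w k * h k n) ^ 2 / (wp k * h k n)) / vt n ^ 2
              = ∑ n, w k ^ 2 / wp k * (v n * (vt n)⁻¹ ^ 2 * h k n) :=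
            Finset.sum_congr rfl fun n _ => by
              field_simp [(hvt0 n).ne', (hwp0 k).ne', (hh k n).ne']
          have a2 : ∑ n, wp k * h k n * (vt n)⁻¹ = ∑ n, wp k * ((vt n)⁻¹ * h k n) :=
            Finset.sum_congr rfl fun n _ => by ring
          rw [Finset.sum_add_distrib, a1, a2, ← Finset.mul_sum, ← Finset.mul_sum,
            ← hPd k, ← hQd k, div_mul_eq_mul_div]
        have e2 : ∑ n, (v n * (w k * h k n) * (vt n)⁻¹ ^ 2 + w k * h k n * (vt n)⁻¹)
            = w k * P k + w k * Q k := by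
          have b1 : ∑ n, (v n * (w k * h k n) * (vt n)⁻¹ ^ 2 + w k * h k n * (vt n)⁻¹)
              = ∑ n, (w k * (v n * (vt n)⁻¹ ^ 2 * h k n) + w k * ((vt n)⁻¹ * h k n)) :=
            Finset.sum_congr rfl fun n _ => by ring
          rw [b1, Finset.sum_add_distrib, ← Finset.mul_sum, ← Finset.mul_sum,
            ← hPd k, ← hQd k]
        rw [e1, e2]
        have := IS_amgm_step (w k) (P k) (Q k) (hw k) (hP0 k) (hQ0 k)
        rw [← hwp k] at this
        exact this
    _ = ∑ n, (v n / vt n + Real.log (vt n)) := by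
        rw [← Finset.sum_add_distrib]
        refine Finset.sum_congr rfl fun n _ => ?_
        have h1 : ∑ k, (v n * (w k * h k n) * (vt n)⁻¹ ^ 2 + w k * h k n * (vt n)⁻¹)
            = v n / vt n + 1 := by
          rw [Finset.sum_add_distrib]
          have e1 : ∑ k, v n * (w k * h k n) * (vt n)⁻¹ ^ 2
              = v n * vt n * (vt n)⁻¹ ^ 2 := by
            rw [hvt n, Finset.mul_sum, Finset.sum_mul]
          have e2 : ∑ k, w k * h k n * (vt n)⁻¹ = vt n * (vt n)⁻¹ := by
            rw [hvt n, Finset.sum_mul]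
          rw [e1, e2, mul_inv_cancel₀ (hvt0 n).ne']
          have hne : vt n ≠ 0 := (hvt0 n).ne'
          field_simp
        rw [h1]
        ring

/-- The majorization-minimization multiplicative basis update for
Itakura–Saito NMF does not increase the IS divergence. -/
theorem IS_NMF_basis_update_decreases_divergence
    (B K N : ℕ)
    (V : Matrix (Fin B) (Fin N) ℝ) (W : Matrix (Fin B) (Fin K) ℝ)
    (H : Matrix (Fin K) (Fin N) ℝ)
    (hV : ∀ b n, 0 < V b n) (hW : ∀ b k, 0 < W b k) (hH : ∀ k n, 0 < H k n)
    (Wplus : Matrix (Fin B) (Fin K) ℝ)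
    (hWplus : ∀ b k, Wplus b k = W b k * Real.sqrt
      ((((Matrix.of fun (b : Fin B) (n : Fin N) =>
            V b n * ((W * H) b n)⁻¹ ^ 2) * Hᵀ : Matrix (Fin B) (Fin K) ℝ) b k) /
       (((Matrix.of fun (b : Fin B) (n : Fin N) =>
            ((W * H) b n)⁻¹) * Hᵀ : Matrix (Fin B) (Fin K) ℝ) b k))) :
    ISdiv V (Wplus * H) ≤ ISdiv V (W * H) := by
  rcases Nat.eq_zero_or_pos K with hK | hK
  · subst hK
    have : Wplus * H = W * H := by
      ext b n
      simp [Matrix.mul_apply]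
    rw [this]
  rcases Nat.eq_zero_or_pos N with hN | hN
  · subst hN
    unfold ISdiv
    simp
  haveI : Nonempty (Fin K) := Fin.pos_iff_nonempty.mp hK
  haveI : Nonempty (Fin N) := Fin.pos_iff_nonempty.mp hN
  unfold ISdiv
  apply Finset.sum_le_sum
  intro b _
  have hmulW : ∀ n, (W * H) b n = ∑ j, W b j * H j n := fun n => Matrix.mul_apply
  have hmulWp : ∀ n, (Wplus * H) b n = ∑ j, Wplus b j * H j n := fun n => Matrix.mul_apply
  have key := IS_core (K := Fin K) (N := Fin N)
    (w := fun k => W b k) (wp := fun k => Wplus b k) (h := fun k n => H k n)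
    (v := fun n => V b n) (vt := fun n => (W * H) b n) (y := fun n => (Wplus * H) b n)
    (P := fun k => ∑ n, V b n * ((W * H) b n)⁻¹ ^ 2 * H k n)
    (Q := fun k => ∑ n, ((W * H) b n)⁻¹ * H k n)
    (hW b) (fun k n => hH k n) (hV b)
    (fun n => hmulW n) (fun n => hmulWp n)
    (fun k => rfl) (fun k => rfl)
    (fun k => by
      show Wplus b k = W b k * Real.sqrt
        ((∑ n, V b n * ((W * H) b n)⁻¹ ^ 2 * H k n) / (∑ n, ((W * H) b n)⁻¹ * H k n))
      rw [hWplus b k]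
      simp [Matrix.mul_apply])
  exact key
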